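/- arXiv:2107.13839 — 3 statements merged into one kernel-verified Lean document; each statement's English description precedes it below -/
import Mathlib

section
/- Let B_1, B_2 be two disks in R^2 with centers z_1 = (-r_1 - ε/2, 0), z_2 = (r_2 + ε/2, 0) and radii r_1, r_2 > 0, where ε > 0 (so dist(B_1,B_2) = ε). Define the inversions R_j(x) = r_j^2 (x - z_j)/|x - z_j|^2 + z_j for j = 1,2. Then the point p_1 = (-( (r_1 - r_2)ε/2 + √ε · τ )/(r_1 + r_2 + ε), 0), where τ = √(2 r_1 r_2 (r_1 + r_2) + (r_1^2 + 3 r_1 r_2 + r_2^2) ε + (r_1 + r_2) ε^2 + ε^3/4), is a fixed point of the composition R_1 ∘ R_2, i.e. R_1(R_2(p_1)) = p_1. -/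
open Real

noncomputable section

abbrev E2 := EuclideanSpace ℝ (Fin 2)

lemma inv1d (r c x : ℝ) (hx : x - c ≠ 0) (z p q : E2)
    (hz : z = !₂[c, 0]) (hp : p = !₂[x, 0]) (hq : q = !₂[r ^ 2 / (x - c) + c, 0]) :
    (r ^ 2 / ‖p - z‖ ^ 2) • (p - z) + z = q := by
  have hsub : p - z = !₂[x - c, 0] := by
    ext i; fin_cases i <;> simp [hp, hz]
  have hnorm : ‖p - z‖ ^ 2 = (x - c) ^ 2 := by
    rw [EuclideanSpace.norm_eq, Real.sq_sqrt (by positivity)]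
    simp [hp, hz, Fin.sum_univ_two]
  rw [hnorm]
  ext i; fin_cases i <;> simp [hsub, hp, hz, hq]
  · field_simp

/-- the point `p₁` is a fixed point of the composed inversions `R₁ ∘ R₂`. -/
theorem fixed_point_R1_R2 (r1 r2 ε : ℝ) (hr1 : 0 < r1) (hr2 : 0 < r2) (hε : 0 < ε) :
    let z1 : E2 := !₂[-r1 - ε / 2, 0]
    let z2 : E2 := !₂[r2 + ε / 2, 0]
    let R1 : E2 → E2 := fun x => (r1 ^ 2 / ‖x - z1‖ ^ 2) • (x - z1) + z1
    let R2 : E2 → E2 := fun x => (r2 ^ 2 / ‖x - z2‖ ^ 2) • (x - z2) + z2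
    let τ : ℝ := Real.sqrt (2 * r1 * r2 * (r1 + r2) + (r1 ^ 2 + 3 * r1 * r2 + r2 ^ 2) * ε
      + (r1 + r2) * ε ^ 2 + ε ^ 3 / 4)
    let p1 : E2 := !₂[-(((r1 - r2) * ε / 2 + Real.sqrt ε * τ) / (r1 + r2 + ε)), 0]
    R1 (R2 p1) = p1 := by
  intro z1 z2 R1 R2 τ p1
  have hτ : τ ^ 2 = 2 * r1 * r2 * (r1 + r2) + (r1 ^ 2 + 3 * r1 * r2 + r2 ^ 2) * ε
      + (r1 + r2) * ε ^ 2 + ε ^ 3 / 4 := Real.sq_sqrt (by positivity)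
  obtain ⟨u, hu, hu0, hu2⟩ : ∃ u : ℝ, u = Real.sqrt ε * τ ∧ 0 ≤ u ∧
      u ^ 2 = ε * (2 * r1 * r2 * (r1 + r2) + (r1 ^ 2 + 3 * r1 * r2 + r2 ^ 2) * ε
        + (r1 + r2) * ε ^ 2 + ε ^ 3 / 4) :=
    ⟨_, rfl, mul_nonneg (Real.sqrt_nonneg _) (Real.sqrt_nonneg _),
      by rw [mul_pow, Real.sq_sqrt hε.le, hτ]⟩
  have hD : (0:ℝ) < r1 + r2 + ε := by linarith
  obtain ⟨A, hA⟩ : ∃ a : ℝ, a = -(((r1 - r2) * ε / 2 + u) / (r1 + r2 + ε)) := ⟨_, rfl⟩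
  have hp1 : p1 = !₂[A, 0] := by rw [hA, hu]
  have hN : 0 < (r1 - r2) * ε / 2 + u := by
    rcases le_or_gt u ((r2 - r1) * ε / 2) with h | h
    · exfalso
      have hq : 0 ≤ (r2 - r1) * ε / 2 := le_trans hu0 h
      have h2 : u ^ 2 ≤ ((r2 - r1) * ε / 2) ^ 2 := by nlinarith
      nlinarith [mul_pos (mul_pos hε hε) (mul_pos hr1 hr2),
        mul_pos (mul_pos hε hε) (mul_pos hr1 hr1),
        mul_pos (mul_pos hε hε) (mul_pos hr2 hr2),
        mul_pos (mul_pos (mul_pos hε hr1) hr2) (add_pos hr1 hr2),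
        mul_pos (mul_pos hε hε) (mul_pos hε (add_pos hr1 hr2)),
        mul_pos (mul_pos hε hε) (mul_pos hε hε)]
    · linarith
  have hA0 : A < 0 := by
    rw [hA]
    have := div_pos hN hD
    linarith
  have hDA : (r1 + r2 + ε) * A = -((r1 - r2) * ε / 2 + u) := by
    rw [hA]; field_simp
  have hA2' : A - (r2 + ε / 2) < 0 := by linarith
  have hA2 : A - (r2 + ε / 2) ≠ 0 := ne_of_lt hA2'
  obtain ⟨B, hB⟩ : ∃ b : ℝ, b = r2 ^ 2 / (A - (r2 + ε / 2)) + (r2 + ε / 2) := ⟨_, rfl⟩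
  have hnum : r2 ^ 2 + (r1 + r2 + ε) * (A - (r2 + ε / 2)) < 0 := by
    nlinarith [hDA, hN]
  have hBc1eq : B - (-r1 - ε / 2)
      = (r2 ^ 2 + (r1 + r2 + ε) * (A - (r2 + ε / 2))) / (A - (r2 + ε / 2)) := by
    rw [hB, add_div, mul_div_assoc, div_self hA2, mul_one]; ring
  have hBc1pos : 0 < B - (-r1 - ε / 2) := by
    rw [hBc1eq]; exact div_pos_of_neg_of_neg hnum hA2'
  have hB1 : B - (-r1 - ε / 2) ≠ 0 := ne_of_gt hBc1pos
  have hquad2 : ((r1 + r2 + ε) * A) ^ 2 = ((r1 - r2) * ε / 2 + u) ^ 2 := by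
    rw [hDA]; ring
  have h1 : (B - (-r1 - ε / 2)) * (A - (r2 + ε / 2))
      = r2 ^ 2 + (r1 + r2 + ε) * (A - (r2 + ε / 2)) := by
    rw [hBc1eq, div_mul_cancel₀ _ hA2]
  have h2 : (r1 + r2 + ε) * ((A - (-r1 - ε / 2)) * ((B - (-r1 - ε / 2)) * (A - (r2 + ε / 2))))
      = (r1 + r2 + ε) * (r1 ^ 2 * (A - (r2 + ε / 2))) := by
    rw [h1]
    linear_combination hquad2 + (r1 - r2) * ε * hDA + hu2
  have h3 : (A - (-r1 - ε / 2)) * ((B - (-r1 - ε / 2)) * (A - (r2 + ε / 2)))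
      = r1 ^ 2 * (A - (r2 + ε / 2)) := mul_left_cancel₀ (ne_of_gt hD) h2
  have h4 : (A - (-r1 - ε / 2)) * (B - (-r1 - ε / 2)) = r1 ^ 2 := by
    apply mul_right_cancel₀ hA2
    linear_combination h3
  have key : r1 ^ 2 / (B - (-r1 - ε / 2)) + (-r1 - ε / 2) = A := by
    rw [← h4, mul_div_assoc, div_self hB1, mul_one]; ring
  have hstep : R2 p1 = !₂[B, 0] := by
    refine inv1d r2 (r2 + ε / 2) A hA2 z2 p1 _ rfl hp1 ?_
    rw [hB]
  rw [hstep]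
  refine inv1d r1 (-r1 - ε / 2) B hB1 z1 _ p1 rfl rfl ?_
  rw [key, hp1]
end
end

section
/- With the same setup (disks B_1, B_2 with centers z_1 = (-r_1-ε/2,0), z_2 = (r_2+ε/2,0), radii r_1, r_2, inversions R_1, R_2, and τ = √(2 r_1 r_2 (r_1+r_2) + (r_1^2+3 r_1 r_2+r_2^2) ε + (r_1+r_2) ε^2 + ε^3/4)), the point p_2 = (( (r_2 - r_1)ε/2 + √ε · τ )/(r_1 + r_2 + ε), 0) is a fixed point of R_2 ∘ R_1, i.e. R_2(R_1(p_2)) = p_2. -/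
open Real

noncomputable section

lemma aux_div (r d : ℝ) (hd : d ≠ 0) : r / d ^ 2 * d = r / d := by
  rw [pow_two]; field_simp

/-- the point `p₂` is a fixed point of the composed inversions `R₂ ∘ R₁`. -/
theorem fixed_point_R2_R1 (r1 r2 ε : ℝ) (hr1 : 0 < r1) (hr2 : 0 < r2) (hε : 0 < ε) :
    let z1 : E2 := !₂[-r1 - ε / 2, 0]
    let z2 : E2 := !₂[r2 + ε / 2, 0]
    let R1 : E2 → E2 := fun x => (r1 ^ 2 / ‖x - z1‖ ^ 2) • (x - z1) + z1
    let R2 : E2 → E2 := fun x => (r2 ^ 2 / ‖x - z2‖ ^ 2) • (x - z2) + z2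
    let τ : ℝ := Real.sqrt (2 * r1 * r2 * (r1 + r2) + (r1 ^ 2 + 3 * r1 * r2 + r2 ^ 2) * ε
      + (r1 + r2) * ε ^ 2 + ε ^ 3 / 4)
    let p2 : E2 := !₂[((r2 - r1) * ε / 2 + Real.sqrt ε * τ) / (r1 + r2 + ε), 0]
    R2 (R1 p2) = p2 := by
  intro z1 z2 R1 R2 τ p2
  set t := Real.sqrt ε with ht_def
  set T := 2 * r1 * r2 * (r1 + r2) + (r1 ^ 2 + 3 * r1 * r2 + r2 ^ 2) * ε
      + (r1 + r2) * ε ^ 2 + ε ^ 3 / 4 with hT_def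
  have ht2 : t ^ 2 = ε := Real.sq_sqrt hε.le
  have hT : 0 < T := by positivity
  have hτ2 : τ ^ 2 = T := Real.sq_sqrt hT.le
  have hτpos : 0 < τ := Real.sqrt_pos.mpr hT
  have htpos : 0 < t := Real.sqrt_pos.mpr hε
  set p : ℝ := ((r2 - r1) * ε / 2 + t * τ) / (r1 + r2 + ε) with hp_def
  have hs : (0:ℝ) < r1 + r2 + ε := by positivity
  have hps : (r1 + r2 + ε) * p = (r2 - r1) * ε / 2 + t * τ := by
    rw [hp_def]; field_simp
  -- key quadratic satisfied by p (multiplied through by r1+r2+ε)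
  have key : (r1 + r2 + ε) * ((r1 + r2 + ε) * p ^ 2 + (r1 - r2) * ε * p
      - 2 * r1 * r2 * ε - 3 * (r1 + r2) * ε ^ 2 / 4 - ε ^ 3 / 4) = 0 := by
    linear_combination ((r1 + r2 + ε) * p + (r2 - r1) * ε / 2 + t * τ + (r1 - r2) * ε) * hps
      + τ ^ 2 * ht2 + ε * hτ2
  -- positivity facts
  have hspa : 0 < (r1 + r2 + ε) * (p + (r1 + ε / 2)) := by
    rw [mul_add, hps]
    nlinarith [mul_pos htpos hτpos]
  have hpa : 0 < p + (r1 + ε / 2) := by nlinarith [hspa, hs]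
  have hpane : p + (r1 + ε / 2) ≠ 0 := ne_of_gt hpa
  have hnum : 0 < (r1 + r2 + ε) * (p + (r1 + ε / 2)) - r1 ^ 2 := by
    rw [mul_add, hps]
    nlinarith [mul_pos htpos hτpos]
  have hnumne : r1 ^ 2 - (r1 + r2 + ε) * (p + (r1 + ε / 2)) ≠ 0 := by linarith
  set q : ℝ := r1 ^ 2 / (p + (r1 + ε / 2)) - (r1 + ε / 2) with hq_def
  clear_value t T p q
  have key' : (r1 + r2 + ε) * p ^ 2 + (r1 - r2) * ε * p
      - 2 * r1 * r2 * ε - 3 * (r1 + r2) * ε ^ 2 / 4 - ε ^ 3 / 4 = 0 :=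
    (mul_eq_zero.mp key).resolve_left hs.ne'
  have hq' : q - (r2 + ε / 2)
      = (r1 ^ 2 - (r1 + r2 + ε) * (p + (r1 + ε / 2))) / (p + (r1 + ε / 2)) := by
    rw [hq_def, sub_div, mul_div_assoc, div_self hpane, mul_one]
    ring
  have hqb : q - (r2 + ε / 2) < 0 := by
    rw [hq']
    apply div_neg_of_neg_of_pos (by linarith) hpa
  have hqbne : q - (r2 + ε / 2) ≠ 0 := ne_of_lt hqb
  -- the key real identity
  have heq : r2 ^ 2 / (q - (r2 + ε / 2)) + (r2 + ε / 2) = p := by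
    rw [hq', div_div_eq_mul_div]
    rw [div_add' _ _ _ hnumne, div_eq_iff hnumne]
    linear_combination key'
  -- component computations
  have hsub1 : p2 - z1 = !₂[p + (r1 + ε / 2), 0] := by
    ext i
    fin_cases i <;>
      simp only [z1, p2, PiLp.sub_apply, PiLp.toLp_apply, Matrix.cons_val_zero, Matrix.cons_val_one,
        Matrix.head_cons, Fin.isValue, Fin.zero_eta, Fin.mk_one]
    · rw [← ht_def, ← hp_def]; ring
    · ring
  have hnorm1 : ‖p2 - z1‖ ^ 2 = (p + (r1 + ε / 2)) ^ 2 := by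
    rw [hsub1, EuclideanSpace.norm_eq, Real.sq_sqrt (by positivity)]
    simp only [Fin.sum_univ_two, PiLp.toLp_apply, Matrix.cons_val_zero, Matrix.cons_val_one, Matrix.head_cons,
      Real.norm_eq_abs, sq_abs]
    ring
  have hR1 : R1 p2 = !₂[q, 0] := by
    ext i
    simp only [R1]
    rw [hnorm1, hsub1]
    fin_cases i <;>
      simp only [z1, PiLp.add_apply, PiLp.smul_apply, PiLp.toLp_apply, smul_eq_mul, Matrix.cons_val_zero,
        Matrix.cons_val_one, Matrix.head_cons, Fin.isValue, Fin.zero_eta, Fin.mk_one]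
    · rw [aux_div _ _ hpane, hq_def]; ring
    · ring
  have hsub2 : R1 p2 - z2 = !₂[q - (r2 + ε / 2), 0] := by
    rw [hR1]
    ext i
    fin_cases i <;>
      simp only [z2, PiLp.sub_apply, PiLp.toLp_apply, Matrix.cons_val_zero, Matrix.cons_val_one,
        Matrix.head_cons, Fin.isValue, Fin.zero_eta, Fin.mk_one]
    all_goals ring
  have hnorm2 : ‖R1 p2 - z2‖ ^ 2 = (q - (r2 + ε / 2)) ^ 2 := by
    rw [hsub2, EuclideanSpace.norm_eq, Real.sq_sqrt (by positivity)]
    simp only [Fin.sum_univ_two, PiLp.toLp_apply, Matrix.cons_val_zero, Matrix.cons_val_one, Matrix.head_cons,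
      Real.norm_eq_abs, sq_abs]
    ring
  show (r2 ^ 2 / ‖R1 p2 - z2‖ ^ 2) • (R1 p2 - z2) + z2 = p2
  rw [hnorm2, hsub2]
  ext i
  fin_cases i <;>
    simp only [z2, p2, PiLp.add_apply, PiLp.smul_apply, PiLp.toLp_apply, smul_eq_mul, Matrix.cons_val_zero,
      Matrix.cons_val_one, Matrix.head_cons, Fin.isValue, Fin.zero_eta, Fin.mk_one]
  · rw [← ht_def, ← hp_def]
    rw [aux_div _ _ hqbne]
    linarith [heq]
  · ring
end
end

section
/- Let B_1, B_2 be the two disks with centers z_1 = (-r_1-ε/2,0), z_2 = (r_2+ε/2,0) and radii r_1, r_2, and let p_1 = (-( (r_1-r_2)ε/2 + √ε τ)/(r_1+r_2+ε), 0), p_2 = (((r_2-r_1)ε/2 + √ε τ)/(r_1+r_2+ε), 0) with τ = √(2r_1r_2(r_1+r_2) + (r_1^2+3r_1r_2+r_2^2)ε + (r_1+r_2)ε^2 + ε^3/4). Then for every x ∈ R^2 \ (B_1 ∪ B_2), |x - p_1| ≥ (-(2r_2+ε)ε/2 + √ε τ)/(r_1+r_2+ε) and |x - p_2| ≥ (-(2r_1+ε)ε/2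 + √ε τ)/(r_1+r_2+ε). -/
open Real

noncomputable section

/-- lower bounds on the distances from any point `x ∉ B₁ ∪ B₂` to the
fixed points `p₁, p₂` of the composed inversions. -/
theorem dist_to_fixed_points (r1 r2 ε : ℝ) (hr1 : 0 < r1) (hr2 : 0 < r2) (hε : 0 < ε) :
    let z1 : E2 := !₂[-r1 - ε / 2, 0]
    let z2 : E2 := !₂[r2 + ε / 2, 0]
    let τ : ℝ := Real.sqrt (2 * r1 * r2 * (r1 + r2) + (r1 ^ 2 + 3 * r1 * r2 + r2 ^ 2) * ε
      + (r1 + r2) * ε ^ 2 + ε ^ 3 / 4)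
    let p1 : E2 := !₂[-(((r1 - r2) * ε / 2 + Real.sqrt ε * τ) / (r1 + r2 + ε)), 0]
    let p2 : E2 := !₂[((r2 - r1) * ε / 2 + Real.sqrt ε * τ) / (r1 + r2 + ε), 0]
    ∀ x : E2, x ∉ Metric.ball z1 r1 ∪ Metric.ball z2 r2 →
      (-(2 * r2 + ε) * ε / 2 + Real.sqrt ε * τ) / (r1 + r2 + ε) ≤ ‖x - p1‖ ∧
      (-(2 * r1 + ε) * ε / 2 + Real.sqrt ε * τ) / (r1 + r2 + ε) ≤ ‖x - p2‖ := by
  intro z1 z2 τ p1 p2 x hx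
  set S := Real.sqrt ε with hS
  set T := τ with hT
  have hD : (0:ℝ) < r1 + r2 + ε := by linarith
  have hS0 : 0 ≤ S := Real.sqrt_nonneg _
  have hT0 : 0 ≤ T := Real.sqrt_nonneg _
  have hS2 : S ^ 2 = ε := Real.sq_sqrt hε.le
  have hT2 : T ^ 2 = 2 * r1 * r2 * (r1 + r2) + (r1 ^ 2 + 3 * r1 * r2 + r2 ^ 2) * ε
      + (r1 + r2) * ε ^ 2 + ε ^ 3 / 4 := Real.sq_sqrt (by positivity)
  -- key inequality: S*T ≤ r1^2 + r1*r2 + (r1+r2)*ε + ε^2/2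
  have hST2 : (S*T)^2 = S^2 * T^2 := by ring
  rw [hS2, hT2] at hST2
  have hQ1 : S * T ≤ r1 ^ 2 + r1 * r2 + (r1 + r2) * ε + ε ^ 2 / 2 := by
    have hQpos : (0:ℝ) < r1 ^ 2 + r1 * r2 + (r1 + r2) * ε + ε ^ 2 / 2 := by positivity
    nlinarith [sq_nonneg (S*T - (r1 ^ 2 + r1 * r2 + (r1 + r2) * ε + ε ^ 2 / 2)),
      sq_nonneg (r1 * (r1 + r2 + ε)), hST2, hQpos, mul_nonneg hS0 hT0]
  have hQ2 : S * T ≤ r2 ^ 2 + r1 * r2 + (r1 + r2) * ε + ε ^ 2 / 2 := by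
    have hQpos : (0:ℝ) < r2 ^ 2 + r1 * r2 + (r1 + r2) * ε + ε ^ 2 / 2 := by positivity
    nlinarith [sq_nonneg (S*T - (r2 ^ 2 + r1 * r2 + (r1 + r2) * ε + ε ^ 2 / 2)),
      sq_nonneg (r2 * (r1 + r2 + ε)), hST2, hQpos, mul_nonneg hS0 hT0]
  have hA : ((r1 - r2) * ε / 2 + S * T) / (r1 + r2 + ε) ≤ r1 + ε / 2 := by
    rw [div_le_iff₀ hD]; nlinarith
  have hB : ((r2 - r1) * ε / 2 + S * T) / (r1 + r2 + ε) ≤ r2 + ε / 2 := by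
    rw [div_le_iff₀ hD]; nlinarith
  simp only [Set.mem_union, Metric.mem_ball, not_or, not_lt] at hx
  obtain ⟨hx1, hx2⟩ := hx
  have hd1 : dist p1 z1 = r1 + ε / 2 - ((r1 - r2) * ε / 2 + S * T) / (r1 + r2 + ε) := by
    rw [EuclideanSpace.dist_eq]
    simp only [p1, z1, Fin.sum_univ_two, PiLp.toLp_apply, Matrix.cons_val_zero, Matrix.cons_val_one,
      Matrix.head_cons, Real.dist_eq, sub_self, abs_zero]
    rw [sq_abs]
    rw [show -(((r1 - r2) * ε / 2 + S * T) / (r1 + r2 + ε)) - (-r1 - ε / 2)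
        = r1 + ε / 2 - ((r1 - r2) * ε / 2 + S * T) / (r1 + r2 + ε) by ring]
    rw [show (0:ℝ) ^ 2 = 0 by ring, add_zero]
    exact Real.sqrt_sq (by linarith)
  have hd2 : dist p2 z2 = r2 + ε / 2 - ((r2 - r1) * ε / 2 + S * T) / (r1 + r2 + ε) := by
    rw [EuclideanSpace.dist_eq]
    simp only [p2, z2, Fin.sum_univ_two, PiLp.toLp_apply, Matrix.cons_val_zero, Matrix.cons_val_one,
      Matrix.head_cons, Real.dist_eq, sub_self, abs_zero]
    rw [sq_abs]
    rw [show (((r2 - r1) * ε / 2 + S * T) / (r1 + r2 + ε) - (r2 + ε / 2)) ^ 2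
        = (r2 + ε / 2 - ((r2 - r1) * ε / 2 + S * T) / (r1 + r2 + ε)) ^ 2 by ring]
    rw [show (0:ℝ) ^ 2 = 0 by ring, add_zero]
    exact Real.sqrt_sq (by linarith)
  have ht1 : dist x z1 ≤ dist x p1 + dist p1 z1 := dist_triangle _ _ _
  have ht2 : dist x z2 ≤ dist x p2 + dist p2 z2 := dist_triangle _ _ _
  have hn1 : ‖x - p1‖ = dist x p1 := (dist_eq_norm _ _).symm
  have hn2 : ‖x - p2‖ = dist x p2 := (dist_eq_norm _ _).symm
  constructor
  · rw [hn1]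
    have : (-(2 * r2 + ε) * ε / 2 + S * T) / (r1 + r2 + ε)
        = ((r1 - r2) * ε / 2 + S * T) / (r1 + r2 + ε) - ε / 2 := by
      field_simp; ring
    rw [this]; linarith [hd1 ▸ ht1, hx1]
  · rw [hn2]
    have : (-(2 * r1 + ε) * ε / 2 + S * T) / (r1 + r2 + ε)
        = ((r2 - r1) * ε / 2 + S * T) / (r1 + r2 + ε) - ε / 2 := by
      field_simp; ring
    rw [this]; linarith [hd2 ▸ ht2, hx2]
end
end
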